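/- The three alternating 4-forms ω⁴₊, ω⁴₋ and ω⁴ on V are invariant, and they are linearly independent. -/

import Mathlib

/-- The model tangent space: a 10-dimensional real vector space with standard basis
`e₀, e₁, e₂, e₃, f₀, f₁, f₂, f₃, p, q` corresponding to the coordinates `0, …, 9`. -/
abbrev V10 : Type := Fin 10 → ℝ

/-- The action of `ad_{E_{α₁}}` on the tangent space `m` of the adjoint orbit
`G₂/GL₂(ℝ)`:  `X e₀ = e₁`, `X e₁ = 2e₂`, `X e₂ = 3e₃`, `X e₃ = 0`, `X f₀ = 0`,
`X f₁ = -3f₀`, `X f₂ = -2f₁`, `X f₃ = -f₂`, `X p = X q = 0`. -/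
noncomputable def Xop : V10 →ₗ[ℝ] V10 :=
  Matrix.toLin' (Matrix.of fun i j : Fin 10 =>
    if i = 1 ∧ j = 0 then (1 : ℝ) else
    if i = 2 ∧ j = 1 then 2 else
    if i = 3 ∧ j = 2 then 3 else
    if i = 4 ∧ j = 5 then -3 else
    if i = 5 ∧ j = 6 then -2 else
    if i = 6 ∧ j = 7 then -1 else 0)

/-- The action of `ad_{E_{-α₁}}`:  `Y e₀ = 0`, `Y e₁ = 3e₀`, `Y e₂ = 2e₁`, `Y e₃ = e₂`,
`Y f₀ = -f₁`, `Y f₁ = -2f₂`, `Y f₂ = -3f₃`, `Y f₃ = 0`, `Y p = Y q = 0`. -/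
noncomputable def Yop : V10 →ₗ[ℝ] V10 :=
  Matrix.toLin' (Matrix.of fun i j : Fin 10 =>
    if i = 0 ∧ j = 1 then (3 : ℝ) else
    if i = 1 ∧ j = 2 then 2 else
    if i = 2 ∧ j = 3 then 1 else
    if i = 5 ∧ j = 4 then -1 else
    if i = 6 ∧ j = 5 then -2 else
    if i = 7 ∧ j = 6 then -3 else 0)

/-- The dual basis covectors `e₀*, …, e₃*, f₀*, …, f₃*, p*, q*` (coordinate projections):
`dual 0, …, dual 3` are `e₀*, …, e₃*`; `dual 4, …, dual 7` are `f₀*, …, f₃*`;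
`dual 8 = p*` and `dual 9 = q*`. -/
noncomputable def dual (i : Fin 10) : V10 →ₗ[ℝ] ℝ := LinearMap.proj i

/-- The wedge product `ξ₁ ∧ ⋯ ∧ ξ_k` of covectors, as the alternating `k`-form
`(v₁, …, v_k) ↦ det (ξ i (v j))`. -/
noncomputable def wdg {k : ℕ} (ξ : Fin k → (V10 →ₗ[ℝ] ℝ)) : AlternatingMap ℝ V10 ℝ (Fin k) :=
  (Matrix.detRowAlternating).compLinearMap (LinearMap.pi ξ)

/-- The Lie derivative of the alternating `k`-form `ω` along the endomorphism `A`
vanishes: `Σ_{i} ω (v₁, …, A vᵢ, …, v_k) = 0` for all `v₁, …, v_k`. -/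
def LieDerivZero {k : ℕ} (A : V10 →ₗ[ℝ] V10) (ω : AlternatingMap ℝ V10 ℝ (Fin k)) : Prop :=
  ∀ v : Fin k → V10, ∑ i, ω (Function.update v i (A (v i))) = 0

/-- An alternating `k`-form on `V10` is invariant if its Lie derivative along both `X`
and `Y` vanishes. -/
def IsInv {k : ℕ} (ω : AlternatingMap ℝ V10 ℝ (Fin k)) : Prop :=
  LieDerivZero Xop ω ∧ LieDerivZero Yop ω

/-- `ω⁴₊ := e₀* ∧ e₁* ∧ e₂* ∧ e₃*`. -/
noncomputable def w4p : AlternatingMap ℝ V10 ℝ (Fin 4) :=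
  wdg ![dual 0, dual 1, dual 2, dual 3]

/-- `ω⁴₋ := f₀* ∧ f₁* ∧ f₂* ∧ f₃*`. -/
noncomputable def w4m : AlternatingMap ℝ V10 ℝ (Fin 4) :=
  wdg ![dual 4, dual 5, dual 6, dual 7]

/-- `ω⁴ := e₀*∧e₁*∧f₀*∧f₁* + e₀*∧e₂*∧f₀*∧f₂* + e₀*∧e₃*∧f₁*∧f₂* + e₁*∧e₂*∧f₀*∧f₃*
  + e₁*∧e₃*∧f₁*∧f₃* + e₂*∧e₃*∧f₂*∧f₃*`. -/
noncomputable def w4 : AlternatingMap ℝ V10 ℝ (Fin 4) :=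
  wdg ![dual 0, dual 1, dual 4, dual 5] + wdg ![dual 0, dual 2, dual 4, dual 6] +
    wdg ![dual 0, dual 3, dual 5, dual 6] + wdg ![dual 1, dual 2, dual 4, dual 7] +
    wdg ![dual 1, dual 3, dual 5, dual 7] + wdg ![dual 2, dual 3, dual 6, dual 7]

/-- **Proposition 4.3.** The three alternating 4-forms `ω⁴₊`, `ω⁴₋` and
`ω⁴` are invariant and linearly independent. -/
lemma det_fin_four' (A : Matrix (Fin 4) (Fin 4) ℝ) :
    A.det =
      A 0 0 * (A 1 1 * (A 2 2 * A 3 3 - A 2 3 * A 3 2) - A 1 2 * (A 2 1 * A 3 3 - A 2 3 * A 3 1)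
        + A 1 3 * (A 2 1 * A 3 2 - A 2 2 * A 3 1))
      - A 0 1 * (A 1 0 * (A 2 2 * A 3 3 - A 2 3 * A 3 2) - A 1 2 * (A 2 0 * A 3 3 - A 2 3 * A 3 0)
        + A 1 3 * (A 2 0 * A 3 2 - A 2 2 * A 3 0))
      + A 0 2 * (A 1 0 * (A 2 1 * A 3 3 - A 2 3 * A 3 1) - A 1 1 * (A 2 0 * A 3 3 - A 2 3 * A 3 0)
        + A 1 3 * (A 2 0 * A 3 1 - A 2 1 * A 3 0))
      - A 0 3 * (A 1 0 * (A 2 1 * A 3 2 - A 2 2 * A 3 1) - A 1 1 * (A 2 0 * A 3 2 - A 2 2 * A 3 0)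
        + A 1 2 * (A 2 0 * A 3 1 - A 2 1 * A 3 0)) := by
  rw [Matrix.det_succ_row_zero]
  simp [Fin.sum_univ_succ, Matrix.det_fin_three, Matrix.submatrix_apply, Fin.succAbove,
    Fin.succ, Fin.castSucc, Fin.castAdd, Fin.castLE]
  ring

lemma wdg_apply (ξ : Fin 4 → (V10 →ₗ[ℝ] ℝ)) (u : Fin 4 → V10) :
    wdg ξ u = Matrix.det (Matrix.of fun i j : Fin 4 => (ξ j) (u i)) := rfl

lemma Xop_apply (x : V10) (j : Fin 10) :
    Xop x j = (if j = 1 then x 0 else 0) + (if j = 2 then 2 * x 1 else 0)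
      + (if j = 3 then 3 * x 2 else 0) + (if j = 4 then -3 * x 5 else 0)
      + (if j = 5 then -2 * x 6 else 0) + (if j = 6 then -(x 7) else 0) := by
  fin_cases j <;>
    simp [Xop, Matrix.toLin'_apply, Matrix.mulVec, dotProduct, Fin.sum_univ_succ]

lemma Yop_apply (x : V10) (j : Fin 10) :
    Yop x j = (if j = 0 then 3 * x 1 else 0) + (if j = 1 then 2 * x 2 else 0)
      + (if j = 2 then x 3 else 0) + (if j = 5 then -(x 4) else 0)
      + (if j = 6 then -2 * x 5 else 0) + (if j = 7 then -3 * x 6 else 0) := by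
  fin_cases j <;>
    simp [Yop, Matrix.toLin'_apply, Matrix.mulVec, dotProduct, Fin.sum_univ_succ]

lemma inv_w4p : IsInv w4p := by
  constructor <;> intro v <;>
  · simp only [w4p, Fin.sum_univ_four, wdg_apply, det_fin_four', Matrix.of_apply,
      Matrix.cons_val_zero, Matrix.cons_val_one, Matrix.head_cons, Matrix.cons_val_two,
      Matrix.tail_cons, Matrix.cons_val_three, dual, LinearMap.proj_apply]
    simp [Function.update_apply, Xop_apply, Yop_apply]
    ring

lemma inv_w4m : IsInv w4m := by
  constructor <;> intro v <;>
  · simp only [w4m, Fin.sum_univ_four, wdg_apply, det_fin_four', Matrix.of_apply,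
      Matrix.cons_val_zero, Matrix.cons_val_one, Matrix.head_cons, Matrix.cons_val_two,
      Matrix.tail_cons, Matrix.cons_val_three, dual, LinearMap.proj_apply]
    simp [Function.update_apply, Xop_apply, Yop_apply]
    ring

set_option maxRecDepth 40000 in
set_option maxHeartbeats 4000000 in
lemma inv_w4 : IsInv w4 := by
  constructor <;> intro v <;>
  · simp only [w4, AlternatingMap.add_apply, Fin.sum_univ_four, wdg_apply, det_fin_four',
      Matrix.of_apply,
      Matrix.cons_val_zero, Matrix.cons_val_one, Matrix.head_cons, Matrix.cons_val_two,
      Matrix.tail_cons, Matrix.cons_val_three, dual, LinearMap.proj_apply]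
    simp [Function.update_apply, Xop_apply, Yop_apply]
    ring

noncomputable def bas (i : Fin 10) : V10 := Pi.single i 1

lemma lin_indep : LinearIndependent ℝ ![w4p, w4m, w4] := by
  rw [Fintype.linearIndependent_iff]
  intro g hg i
  have h0 := congrArg (fun F : AlternatingMap ℝ V10 ℝ (Fin 4) =>
    F ![bas 0, bas 1, bas 2, bas 3]) hg
  have h1 := congrArg (fun F : AlternatingMap ℝ V10 ℝ (Fin 4) =>
    F ![bas 4, bas 5, bas 6, bas 7]) hg
  have h2 := congrArg (fun F : AlternatingMap ℝ V10 ℝ (Fin 4) =>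
    F ![bas 0, bas 1, bas 4, bas 5]) hg
  simp only [Fin.sum_univ_three, Matrix.cons_val_zero, Matrix.cons_val_one, Matrix.head_cons,
    Matrix.cons_val_two, Matrix.tail_cons, AlternatingMap.add_apply, AlternatingMap.smul_apply,
    AlternatingMap.zero_apply, smul_eq_mul, w4p, w4m, w4, wdg_apply, det_fin_four',
    Matrix.of_apply, dual, LinearMap.proj_apply, bas] at h0 h1 h2
  simp [Pi.single_apply] at h0 h1 h2
  fin_cases i <;> simp_all

theorem stmt11 :
    IsInv w4p ∧ IsInv w4m ∧ IsInv w4 ∧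
    LinearIndependent ℝ ![w4p, w4m, w4] :=
  ⟨inv_w4p, inv_w4m, inv_w4, lin_indep⟩
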